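/- Let w be a weight structure on C and let H : C^op → A be a cohomological functor. Then the virtual t-truncation τ_{≤n}(H) is of weight range ≤ n (it annihilates C_{w≥n+1}) and τ_{≥m}(H) is of weight range ≥ m (it annihilates C_{w≤m-1}). -/

import Mathlib

open CategoryTheory Category Limits Pretriangulated ZeroObject Opposite

universe v u u₂ v₂

variable (C : Type u) [Category.{v} C] [Preadditive C] [HasZeroObject C]
  [HasShift C ℤ] [∀ n : ℤ, (CategoryTheory.shiftFunctor C n).Additive] [Pretriangulated C]

/-- `X` is a retract (direct summand) of `Y`. -/
def IsRetract {C : Type u} [Category.{v} C] (X Y : C) : Prop :=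
  ∃ (s : X ⟶ Y) (r : Y ⟶ X), s ≫ r = 𝟙 X

/-- A weight structure on a pretriangulated category `C`, in the homological convention:
`le` is the class `C_{w≤0}` and `ge` is the class `C_{w≥0}`. -/
structure WeightStructure where
  le : Set C
  ge : Set C
  le_retract : ∀ ⦃X Y : C⦄, IsRetract X Y → Y ∈ le → X ∈ le
  ge_retract : ∀ ⦃X Y : C⦄, IsRetract X Y → Y ∈ ge → X ∈ ge
  le_shift : ∀ X : C, X ∈ le → X⟦(-1 : ℤ)⟧ ∈ le
  ge_shift : ∀ X : C, X ∈ ge → X⟦(1 : ℤ)⟧ ∈ ge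
  orth : ∀ ⦃X Y : C⦄, X ∈ le → Y ∈ ge → ∀ f : X ⟶ Y⟦(1 : ℤ)⟧, f = 0
  decomp : ∀ M : C, ∃ (L R : C) (f : L ⟶ M) (g : M ⟶ R) (h : R ⟶ L⟦(1 : ℤ)⟧),
    Triangle.mk f g h ∈ (distTriang C) ∧ L ∈ le ∧ R⟦(-1 : ℤ)⟧ ∈ ge

/-- A t-structure on a pretriangulated category `C`, in the homological convention:
`le` is the class `C_{t≤0}` and `ge` is the class `C_{t≥0}`. -/
structure HomTStructure where
  le : Set C
  ge : Set C
  le_iso : ∀ ⦃X Y : C⦄, (X ≅ Y) → Y ∈ le → X ∈ le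
  ge_iso : ∀ ⦃X Y : C⦄, (X ≅ Y) → Y ∈ ge → X ∈ ge
  le_shift : ∀ X : C, X ∈ le → X⟦(-1 : ℤ)⟧ ∈ le
  ge_shift : ∀ X : C, X ∈ ge → X⟦(1 : ℤ)⟧ ∈ ge
  orth : ∀ ⦃X Y : C⦄, X⟦(-1 : ℤ)⟧ ∈ ge → Y ∈ le → ∀ f : X ⟶ Y, f = 0
  decomp : ∀ M : C, ∃ (L R : C) (f : L ⟶ M) (g : M ⟶ R) (h : R ⟶ L⟦(1 : ℤ)⟧),
    Triangle.mk f g h ∈ (distTriang C) ∧ L ∈ ge ∧ R⟦(1 : ℤ)⟧ ∈ le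

/-- A contravariant additive functor is cohomological if it sends distinguished
triangles to exact sequences. -/
def IsCohomological {A : Type u₂} [Category.{v₂} A] [Abelian A]
    (H : Cᵒᵖ ⥤ A) [H.Additive] : Prop :=
  ∀ (T : Triangle C), ∀ hT : T ∈ distTriang C,
    (ShortComplex.mk (H.map T.mor₂.op) (H.map T.mor₁.op) (by
      rw [← H.map_comp, ← op_comp, comp_distTriang_mor_zero₁₂ _ hT, op_zero, H.map_zero])).Exact


section Aux

variable {C}

lemma WeightStructure.ge_iso (w : WeightStructure C) {X Y : C} (e : X ≅ Y)
    (hY : Y ∈ w.ge) : X ∈ w.ge :=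
  w.ge_retract ⟨e.hom, e.inv, e.hom_inv_id⟩ hY

lemma WeightStructure.le_iso (w : WeightStructure C) {X Y : C} (e : X ≅ Y)
    (hY : Y ∈ w.le) : X ∈ w.le :=
  w.le_retract ⟨e.hom, e.inv, e.hom_inv_id⟩ hY

lemma WeightStructure.orth' (w : WeightStructure C) {X Y : C} (a b : ℤ)
    (hab : b + 1 = a) (hX : X⟦a⟧ ∈ w.le) (hY : Y⟦b⟧ ∈ w.ge) (f : X ⟶ Y) : f = 0 := by
  have h := w.orth hX hY
    ((shiftFunctor C a).map f ≫ ((shiftFunctorAdd' C b 1 a hab).app Y).hom)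
  apply (shiftFunctor C a).map_injective
  rw [Functor.map_zero, ← cancel_mono ((shiftFunctorAdd' C b 1 a hab).app Y).hom,
    zero_comp, h]

end Aux

/-- τ_{≤n}(H) annihilates C_{w≥n+1} and τ_{≥m}(H) annihilates C_{w≤m-1}. -/
theorem virtual_truncation_weight_range
    {A : Type u₂} [Category.{v₂} A] [Abelian A]
    (w : WeightStructure C) (H : Cᵒᵖ ⥤ A) [H.Additive] (hH : IsCohomological C H) :
    -- τ_{≤n}(H) is of weight range ≤ n
    (∀ (n : ℤ) (M : C), M⟦(-(n + 1) : ℤ)⟧ ∈ w.ge →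
      ∀ (P₁ Q₁ : C) (a₁ : P₁ ⟶ M) (b₁ : M ⟶ Q₁) (c₁ : Q₁ ⟶ P₁⟦(1 : ℤ)⟧),
        Triangle.mk a₁ b₁ c₁ ∈ (distTriang C) →
        P₁⟦(-(n + 1) : ℤ)⟧ ∈ w.le → Q₁⟦(-(n + 2) : ℤ)⟧ ∈ w.ge →
      ∀ (P₀ Q₀ : C) (a₀ : P₀ ⟶ M) (b₀ : M ⟶ Q₀) (c₀ : Q₀ ⟶ P₀⟦(1 : ℤ)⟧),
        Triangle.mk a₀ b₀ c₀ ∈ (distTriang C) →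
        P₀⟦(-n : ℤ)⟧ ∈ w.le → Q₀⟦(-(n + 1) : ℤ)⟧ ∈ w.ge →
      ∀ (e : P₀ ⟶ P₁), e ≫ a₁ = a₀ →
        IsZero (image (H.map e.op))) ∧
    -- τ_{≥m}(H) is of weight range ≥ m
    (∀ (m : ℤ) (M : C), M⟦(1 - m : ℤ)⟧ ∈ w.le →
      ∀ (A₁ Q₁ : C) (a₁ : A₁ ⟶ M) (b₁ : M ⟶ Q₁) (c₁ : Q₁ ⟶ A₁⟦(1 : ℤ)⟧),
        Triangle.mk a₁ b₁ c₁ ∈ (distTriang C) →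
        A₁⟦(-(m - 1) : ℤ)⟧ ∈ w.le → Q₁⟦(-m : ℤ)⟧ ∈ w.ge →
      ∀ (A₀ Q₀ : C) (a₀ : A₀ ⟶ M) (b₀ : M ⟶ Q₀) (c₀ : Q₀ ⟶ A₀⟦(1 : ℤ)⟧),
        Triangle.mk a₀ b₀ c₀ ∈ (distTriang C) →
        A₀⟦(-(m - 2) : ℤ)⟧ ∈ w.le → Q₀⟦(-(m - 1) : ℤ)⟧ ∈ w.ge →
      ∀ (d : Q₀ ⟶ Q₁), b₀ ≫ d = b₁ →
        IsZero (image (H.map d.op))) := by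

  constructor
  · intro n M hM P₁ Q₁ a₁ b₁ c₁ hT₁ hP₁ hQ₁ P₀ Q₀ a₀ b₀ c₀ hT₀ hP₀ hQ₀ e he
    have ha₀ : a₀ = 0 := w.orth' (-n) (-(n+1)) (by ring) hP₀ hM a₀
    obtain ⟨g, hg⟩ := Triangle.coyoneda_exact₂ _
      (inv_rot_of_distTriang _ hT₁) e (he.trans ha₀)
    have hg0 : g = 0 := by
      refine w.orth' (-n) (-(n+1)) (by ring) hP₀ ?_ g
      exact w.ge_iso ((shiftFunctorAdd' C (-1) (-(n+1)) (-(n+2)) (by ring)).app Q₁).symm hQ₁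
    have he0 : e = 0 := by rw [hg, hg0, zero_comp]; rfl
    have : H.map e.op = 0 := by rw [he0, op_zero, H.map_zero]
    exact (isZero_zero A).of_iso (imageZero' this)
  · intro m M hM A₁ Q₁ a₁ b₁ c₁ hT₁ hA₁ hQ₁ A₀ Q₀ a₀ b₀ c₀ hT₀ hA₀ hQ₀ d hd
    have hb₁ : b₁ = 0 := w.orth' (1-m) (-m) (by ring) hM hQ₁ b₁
    obtain ⟨g, hg⟩ := Triangle.yoneda_exact₃ _ hT₀ d (show b₀ ≫ d = 0 by rw [hd, hb₁])
    have hg0 : g = 0 := by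
      refine w.orth' (-(m-1)) (-m) (by ring) ?_ hQ₁ g
      exact w.le_iso ((shiftFunctorAdd' C 1 (-(m-1)) (-(m-2)) (by ring)).app A₀).symm hA₀
    have hd0 : d = 0 := by rw [hg, hg0, comp_zero]; rfl
    have : H.map d.op = 0 := by rw [hd0, op_zero, H.map_zero]
    exact (isZero_zero A).of_iso (imageZero' this)
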